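/- If M is S-Mittag-Leffler with respect to a class Q of R-modules, then M is S-Mittag-Leffler with respect to the class of all direct limits (filtered colimits) of directed systems of modules from Q. -/

import Mathlib

/-- The canonical map `M ⊗[R] (∀ i, N i) →ₗ[R] ∀ i, M ⊗[R] N i`. -/
noncomputable def tensorPiMap (R : Type*) [CommRing R] (M : Type*) [AddCommGroup M]
    [Module R M] {ι : Type*} (N : ι → Type*) [∀ i, AddCommGroup (N i)]
    [∀ i, Module R (N i)] :
    (TensorProduct R M (∀ i, N i)) →ₗ[R] (∀ i, TensorProduct R M (N i)) :=
  LinearMap.pi fun i => LinearMap.lTensor M (LinearMap.proj i)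

/-- `M` is `S`-Mittag-Leffler with respect to a class `Q` of `R`-modules if for every
family of modules in `Q`, the canonical map `M ⊗ ∏ Qᵢ → ∏ (M ⊗ Qᵢ)` has `S`-torsion kernel. -/
def IsSMittagLeffler (R : Type) [CommRing R] (S : Submonoid R) (M : Type) [AddCommGroup M]
    [Module R M] (Q : ModuleCat R → Prop) : Prop :=
  ∀ (ι : Type) (N : ι → ModuleCat R), (∀ i, Q (N i)) →
    ∀ x ∈ LinearMap.ker (tensorPiMap R M fun i => (N i : Type)), ∃ s ∈ S, s • x = 0

/-- Auxiliary: `P` is the direct limit of the directed system `(G, f)`. -/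
def IsDirectLimitOfSystem (R : Type) [CommRing R] (ι : Type) [Preorder ι] [DecidableEq ι]
    (G : ι → ModuleCat R) (f : ∀ i j, i ≤ j → (G i : Type) →ₗ[R] (G j : Type))
    (P : ModuleCat R) : Prop :=
  IsDirected ι (· ≤ ·) ∧ DirectedSystem (fun i => (G i : Type)) (fun i j h => f i j h) ∧
    Nonempty ((Module.DirectLimit (fun i => (G i : Type)) f) ≃ₗ[R] (P : Type))

/-- `P` is (isomorphic to) a direct limit of a directed system of modules from `Q`. -/
def IsDirectLimitOf {R : Type} [CommRing R] (Q : ModuleCat R → Prop)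
    (P : ModuleCat R) : Prop :=
  ∃ (ι : Type) (instP : Preorder ι) (instD : DecidableEq ι) (G : ι → ModuleCat R)
    (f : ∀ i j, i ≤ j → (G i : Type) →ₗ[R] (G j : Type)),
    (∀ i, Q (G i)) ∧ @IsDirectLimitOfSystem R _ ι instP instD G f P

/-- Tensoring a directed system with `M` yields a directed system. -/
lemma directedSystem_lTensor {R : Type*} [CommRing R] (M : Type*) [AddCommGroup M] [Module R M]
    {κ : Type*} [Preorder κ] {G : κ → Type*} [∀ j, AddCommGroup (G j)] [∀ j, Module R (G j)]
    (f : ∀ i j, i ≤ j → G i →ₗ[R] G j) [DirectedSystem G fun i j h => f i j h] :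
    DirectedSystem (fun j => TensorProduct R M (G j))
      (fun i j h => LinearMap.lTensor M (f i j h)) := by
  constructor
  · intro i x
    have hf : f i i le_rfl = LinearMap.id :=
      LinearMap.ext fun y => Module.DirectedSystem.map_self f y
    rw [hf, LinearMap.lTensor_id, LinearMap.id_apply]
  · intro k j i hij hjk x
    have hf : (f j k hjk).comp (f i j hij) = f i k (hij.trans hjk) :=
      LinearMap.ext fun y => Module.DirectedSystem.map_map f hij hjk y
    rw [← LinearMap.lTensor_comp_apply, hf]

set_option synthInstance.maxHeartbeats 1000000 in
set_option maxHeartbeats 1000000 in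
/-- Key lemma: a finite tensor relation in `M ⊗ (direct limit)` which vanishes can be realized,
vanishing, at a finite stage. -/
lemma exists_stage {R : Type*} [CommRing R] {M : Type*} [AddCommGroup M] [Module R M]
    {κ : Type*} [Preorder κ] [DecidableEq κ] [IsDirected κ (· ≤ ·)] [Nonempty κ]
    {G : κ → Type*} [∀ j, AddCommGroup (G j)] [∀ j, Module R (G j)]
    (f : ∀ i j, i ≤ j → G i →ₗ[R] G j) [DirectedSystem G fun i j h => f i j h]
    {α : Type*} (t : Finset α) (m : α → M) (a : α → Module.DirectLimit G f)
    (h0 : (∑ p ∈ t, m p ⊗ₜ[R] a p) = 0) :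
    ∃ (j : κ) (g : α → G j), (∀ p ∈ t, Module.DirectLimit.of R κ G f j (g p) = a p) ∧
      (∑ p ∈ t, m p ⊗ₜ[R] g p) = 0 := by
  classical
  -- lift each `a p` to some stage
  choose idx xx hxx using fun p => Module.DirectLimit.exists_of (a p)
  -- common stage
  obtain ⟨j0, hj0⟩ := Finset.exists_le (t.image idx)
  have hj0' : ∀ p ∈ t, idx p ≤ j0 := fun p hp => hj0 _ (Finset.mem_image_of_mem idx hp)
  set g0 : α → G j0 := fun p => if h : p ∈ t then f (idx p) j0 (hj0' p h) (xx p) else 0 with hg0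
  have hof : ∀ p ∈ t, Module.DirectLimit.of R κ G f j0 (g0 p) = a p := by
    intro p hp
    simp only [hg0, dif_pos hp, Module.DirectLimit.of_f, hxx]
  -- the sum at stage j0 maps to zero in the direct limit of `M ⊗ G ·`
  haveI := directedSystem_lTensor M f
  have hzero : Module.DirectLimit.of R κ (fun j => TensorProduct R M (G j))
      (fun i j h => LinearMap.lTensor M (f i j h)) j0 (∑ p ∈ t, m p ⊗ₜ[R] g0 p) = 0 := by
    have h1 : Module.DirectLimit.of R κ (fun j => TensorProduct R M (G j))
        (fun i j h => LinearMap.lTensor M (f i j h)) j0 (∑ p ∈ t, m p ⊗ₜ[R] g0 p)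
        = TensorProduct.directLimitRight f M (∑ p ∈ t, m p ⊗ₜ[R] a p) := by
      rw [map_sum, map_sum]
      refine Finset.sum_congr rfl fun p hp => ?_
      rw [← hof p hp, TensorProduct.directLimitRight_tmul_of]
    rw [h1, h0, map_zero]
  obtain ⟨j1, hj1, hj1z⟩ := Module.DirectLimit.of.zero_exact hzero
  refine ⟨j1, fun p => f j0 j1 hj1 (g0 p), ?_, ?_⟩
  · intro p hp
    rw [Module.DirectLimit.of_f, hof p hp]
  · rw [map_sum] at hj1z
    simpa using hj1z

theorem s_mittagLeffler_direct_limits {R : Type} [CommRing R] (S : Submonoid R)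
    {M : Type} [AddCommGroup M] [Module R M] (Q : ModuleCat R → Prop)
    (hM : IsSMittagLeffler R S M Q) :
    IsSMittagLeffler R S M (IsDirectLimitOf Q) := by
  classical
  intro ι N hN x hx
  choose κ iP iD G f hGf using hN
  have hQ : ∀ i j, Q (G i j) := fun i => (hGf i).1
  have hDir : ∀ i, @IsDirected (κ i) (iP i).le := fun i => (hGf i).2.1
  have hSys : ∀ i, @DirectedSystem (κ i) (iP i) (fun j => (G i j : Type))
      (fun j k h => f i j k h) := fun i => (hGf i).2.2.1
  have e : ∀ i, @Module.DirectLimit R _ (κ i) (iP i) (fun j => (G i j : Type)) _ _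
      (f i) (iD i) ≃ₗ[R] (N i : Type) := fun i => ((hGf i).2.2.2).some
  obtain ⟨t, rfl⟩ := TensorProduct.exists_finset x
  set x : TensorProduct R M (∀ i, (N i : Type)) := ∑ p ∈ t, p.1 ⊗ₜ[R] p.2 with hxdef
  -- componentwise vanishing
  have hcomp : ∀ i : ι, (∑ p ∈ t, p.1 ⊗ₜ[R] (p.2 i) : TensorProduct R M (N i : Type)) = 0 := by
    intro i
    have h1 := congrFun (LinearMap.mem_ker.mp hx) i
    simp only [tensorPiMap, LinearMap.pi_apply] at h1
    rw [map_sum] at h1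
    simpa using h1
  set ι' : Type := {i : ι // Nonempty (κ i)} with hι'
  -- for each relevant index choose a stage
  have key : ∀ i : ι', ∃ (j : κ i.1) (g : (M × ∀ i, (N i : Type)) → (G i.1 j : Type)),
      (∀ p ∈ t, @Module.DirectLimit.of R _ (κ i.1) (iP i.1) (fun j => (G i.1 j : Type)) _ _
          (f i.1) (iD i.1) j (g p) = (e i.1).symm (p.2 i.1)) ∧
      (∑ p ∈ t, p.1 ⊗ₜ[R] g p) = 0 := by
    rintro ⟨i, hi⟩
    letI := iP i; letI := iD i
    haveI := hDir i; haveI := hSys i; haveI := hi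
    refine exists_stage (f i) t Prod.fst (fun p => (e i).symm (p.2 i)) ?_
    have : (∑ p ∈ t, p.1 ⊗ₜ[R] ((e i).symm (p.2 i))) =
        LinearMap.lTensor M ((e i).symm : (N i : Type) →ₗ[R] _)
          (∑ p ∈ t, p.1 ⊗ₜ[R] (p.2 i)) := by
      rw [map_sum]; simp
    rw [this, hcomp i, map_zero]
  choose j g hg1 hg2 using key
  -- apply the hypothesis to the family of stages
  set N' : ι' → ModuleCat R := fun i => G i.1 (j i) with hN'
  set y : TensorProduct R M (∀ i : ι', (N' i : Type)) :=
    ∑ p ∈ t, p.1 ⊗ₜ[R] (fun i : ι' => g i p) with hydef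
  have hy : y ∈ LinearMap.ker (tensorPiMap R M fun i : ι' => (N' i : Type)) := by
    rw [LinearMap.mem_ker]
    funext i
    simp only [tensorPiMap, LinearMap.pi_apply, hydef, map_sum, Pi.zero_apply]
    have := hg2 i
    simpa using this
  obtain ⟨s, hs, hsy⟩ := hM ι' N' (fun i => hQ i.1 (j i)) y hy
  refine ⟨s, hs, ?_⟩
  -- the map from the product of stages back to the product of limits
  set φ : (∀ i : ι', (N' i : Type)) →ₗ[R] (∀ i, (N i : Type)) :=
    LinearMap.pi fun i =>
      if h : Nonempty (κ i) then
        (((e i : _ ≃ₗ[R] (N i : Type)) : _ →ₗ[R] (N i : Type)).comp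
          (@Module.DirectLimit.of R _ (κ i) (iP i) (fun j => (G i j : Type)) _ _
            (f i) (iD i) (j ⟨i, h⟩))).comp (LinearMap.proj (⟨i, h⟩ : ι'))
      else 0 with hφ
  have hφy : LinearMap.lTensor M φ y = x := by
    rw [hydef, map_sum, hxdef]
    refine Finset.sum_congr rfl ?_
    intro p hp
    rw [LinearMap.lTensor_tmul]
    congr 1
    funext i
    simp only [hφ, LinearMap.pi_apply]
    by_cases h : Nonempty (κ i)
    · simp only [dif_pos h, LinearMap.comp_apply, LinearMap.proj_apply, LinearMap.coe_coe]
      rw [hg1 ⟨i, h⟩ p hp]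
      exact (e i).apply_symm_apply _
    · simp only [dif_neg h, LinearMap.zero_apply]
      haveI : IsEmpty (κ i) := not_nonempty_iff.mp h
      letI := iP i; letI := iD i
      have hz : (e i).symm (p.2 i) = (0 : Module.DirectLimit (fun j => (G i j : Type)) (f i)) :=
        Subsingleton.elim _ _
      have := congrArg (e i) hz
      rw [LinearEquiv.apply_symm_apply, map_zero] at this
      exact this.symm
  calc s • x = s • LinearMap.lTensor M φ y := by rw [hφy]
    _ = LinearMap.lTensor M φ (s • y) := by rw [map_smul]
    _ = 0 := by rw [hsy, map_zero]
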